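/- The Gaussian mechanism F(x) = f(x) + N(0, sigma^2 S_f^2 I), where S_f bounds the L2 sensitivity of f (i.e., ||f(D) - f(D')|| <= S_f for all adjacent D, D'), satisfies (epsilon, delta)-differential privacy whenever sigma >= sqrt(2 ln(1.25/delta))/epsilon with epsilon in (0,1). -/

import Mathlib

open ProbabilityTheory


open ProbabilityTheory MeasureTheory Real Set Filter NNReal ENNReal

set_option maxHeartbeats 1000000

namespace GaussDP

variable {v : ℝ≥0}

lemma coe_pos (hv : v ≠ 0) : (0:ℝ) < (v:ℝ) := by
  exact_mod_cast zero_lt_iff.mpr hv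

lemma translate_Ioi (c r : ℝ) :
    gaussianReal c v (Set.Ioi (c + r)) = gaussianReal 0 v (Set.Ioi r) := by
  have h := gaussianReal_map_add_const (μ := 0) (v := v) c
  rw [zero_add] at h
  rw [← h, Measure.map_apply (measurable_add_const c) measurableSet_Ioi]
  congr 1
  ext x
  simp only [Set.mem_preimage, Set.mem_Ioi]
  constructor <;> intro h' <;> linarith

lemma translate_Iio (c r : ℝ) :
    gaussianReal c v (Set.Iio (c + r)) = gaussianReal 0 v (Set.Iio r) := by
  have h := gaussianReal_map_add_const (μ := 0) (v := v) c
  rw [zero_add] at h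
  rw [← h, Measure.map_apply (measurable_add_const c) measurableSet_Iio]
  congr 1
  ext x
  simp only [Set.mem_preimage, Set.mem_Iio]
  constructor <;> intro h' <;> linarith

lemma neg_Iio (t : ℝ) :
    gaussianReal 0 v (Set.Iio t) = gaussianReal 0 v (Set.Ioi (-t)) := by
  have h := gaussianReal_map_const_mul (μ := 0) (v := v) (-1)
  have hv1 : (NNReal.mk ((-1:ℝ)^2) (sq_nonneg _) * v : ℝ≥0) = v := by
    apply NNReal.eq
    push_cast
    norm_num
  rw [hv1, mul_zero] at h
  conv_lhs => rw [← h]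
  rw [Measure.map_apply (by fun_prop) measurableSet_Iio]
  congr 1
  ext x
  simp only [Set.mem_preimage, Set.mem_Iio, Set.mem_Ioi]
  constructor <;> intro h' <;> linarith

lemma half : gaussianReal 0 v (Set.Ioi 0) ≤ ENNReal.ofReal (1/2) := by
  have hsym : gaussianReal 0 v (Set.Iio 0) = gaussianReal 0 v (Set.Ioi 0) := by
    simpa using neg_Iio (v := v) 0
  have hd : Disjoint (Set.Iio (0:ℝ)) (Set.Ioi 0) :=
    (Set.Iic_disjoint_Ioi le_rfl).mono_left Set.Iio_subset_Iic_self
  have hu := measure_union (μ := gaussianReal 0 v) hd measurableSet_Ioi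
  have hle : gaussianReal 0 v (Set.Iio 0 ∪ Set.Ioi 0) ≤ 1 := prob_le_one
  rw [hu, hsym] at hle
  have h2 : gaussianReal 0 v (Set.Ioi 0) * 2 ≤ 1 := by rw [mul_two]; exact hle
  have h3 : ENNReal.ofReal (1/2) = 1/2 := by
    rw [ENNReal.ofReal_div_of_pos (by norm_num), ENNReal.ofReal_one, ENNReal.ofReal_ofNat]
  rw [h3]
  exact (ENNReal.le_div_iff_mul_le (Or.inl two_ne_zero) (Or.inl ENNReal.ofNat_ne_top)).mpr h2

lemma strip (hv : v ≠ 0) (t : ℝ) :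
    gaussianReal 0 v (Set.Ioc t 0) ≤ ENNReal.ofReal ((-t) * (Real.sqrt (2 * π * v))⁻¹) := by
  have hv0 := coe_pos hv
  rw [gaussianReal_apply _ hv]
  calc ∫⁻ x in Set.Ioc t 0, gaussianPDF 0 v x
      ≤ ∫⁻ _ in Set.Ioc t 0, ENNReal.ofReal ((Real.sqrt (2 * π * v))⁻¹) := by
        refine setLIntegral_mono measurable_const fun x _ => ?_
        simp only [gaussianPDF, gaussianPDFReal]
        apply ENNReal.ofReal_le_ofReal
        have h1 : Real.exp (-(x - 0)^2 / (2 * v)) ≤ 1 := by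
          rw [Real.exp_le_one_iff]
          apply div_nonpos_of_nonpos_of_nonneg
          · simp [sq_nonneg]
          · positivity
        nlinarith [inv_nonneg.mpr (Real.sqrt_nonneg (2 * π * (v:ℝ))),
          Real.exp_pos (-(x - 0)^2 / (2 * (v:ℝ)))]
    _ = ENNReal.ofReal ((Real.sqrt (2 * π * v))⁻¹) * volume (Set.Ioc t 0) := setLIntegral_const _ _
    _ ≤ ENNReal.ofReal ((-t) * (Real.sqrt (2 * π * v))⁻¹) := by
        rw [Real.volume_Ioc,
          ← ENNReal.ofReal_mul (inv_nonneg.mpr (Real.sqrt_nonneg (2 * π * (v:ℝ))))]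
        exact ENNReal.ofReal_le_ofReal (le_of_eq (by ring))

lemma tail (hv : v ≠ 0) {c : ℝ} (hc : 0 < c) :
    gaussianReal 0 v (Set.Ioi c) ≤
      ENNReal.ofReal ((Real.sqrt (2 * π * v))⁻¹ * c⁻¹ * ((v:ℝ) * Real.exp (-c^2 / (2*v)))) := by
  have hv0 := coe_pos hv
  have hderiv : ∀ x ∈ Set.Ici c, HasDerivAt (fun y : ℝ => -(v:ℝ) * Real.exp (-y^2/(2*v)))
      (x * Real.exp (-x^2/(2*(v:ℝ)))) x := by
    intro x _
    have h1 : HasDerivAt (fun y : ℝ => -y^2/(2*(v:ℝ))) (-(2*x)/(2*(v:ℝ))) x := by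
      have h := ((hasDerivAt_pow 2 x).neg).div_const (2*(v:ℝ))
      simpa using h
    have h2 := (h1.exp).const_mul (-(v:ℝ))
    refine h2.congr_deriv ?_
    field_simp
  have g'pos : ∀ x ∈ Set.Ioi c, 0 ≤ x * Real.exp (-x^2/(2*(v:ℝ))) := fun x hx =>
    mul_nonneg (le_of_lt (lt_trans hc hx)) (Real.exp_pos _).le
  have htend : Tendsto (fun y : ℝ => -(v:ℝ) * Real.exp (-y^2/(2*v))) atTop (nhds 0) := by
    have h1 : Tendsto (fun y : ℝ => -y^2/(2*(v:ℝ))) atTop atBot := by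
      have hsq : Tendsto (fun y : ℝ => -y^2) atTop atBot :=
        Filter.tendsto_neg_atTop_atBot.comp (tendsto_pow_atTop two_ne_zero)
      exact hsq.atBot_div_const (by positivity)
    have h2 := (Real.tendsto_exp_atBot.comp h1).const_mul (-(v:ℝ))
    simpa using h2
  have hint := integral_Ioi_of_hasDerivAt_of_nonneg' hderiv g'pos htend
  have hIntOn := integrableOn_Ioi_deriv_of_nonneg' hderiv g'pos htend
  rw [gaussianReal_apply_eq_integral _ hv]
  apply ENNReal.ofReal_le_ofReal
  have hmono : ∫ x in Set.Ioi c, gaussianPDFReal 0 v x ≤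
      ∫ x in Set.Ioi c, (Real.sqrt (2*π*(v:ℝ)))⁻¹ * c⁻¹ * (x * Real.exp (-x^2/(2*(v:ℝ)))) := by
    refine setIntegral_mono_on ((integrable_gaussianPDFReal 0 v).integrableOn)
      (hIntOn.const_mul _) measurableSet_Ioi fun x hx => ?_
    have hx' : c < x := hx
    rw [gaussianPDFReal, sub_zero]
    have hi : (1:ℝ) ≤ c⁻¹ * x := by
      rw [inv_mul_eq_div, le_div_iff₀ hc]
      linarith
    have hK : (0:ℝ) ≤ (Real.sqrt (2*π*(v:ℝ)))⁻¹ := inv_nonneg.mpr (Real.sqrt_nonneg _)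
    nlinarith [Real.exp_pos (-x^2/(2*(v:ℝ))), mul_nonneg hK (Real.exp_pos (-x^2/(2*(v:ℝ)))).le]
  rw [MeasureTheory.integral_const_mul, hint] at hmono
  calc ∫ x in Set.Ioi c, gaussianPDFReal 0 v x ≤ _ := hmono
    _ = (Real.sqrt (2 * π * v))⁻¹ * c⁻¹ * ((v:ℝ) * Real.exp (-c^2 / (2*v))) := by
        norm_num

lemma pdf_ratio (hv : v ≠ 0) (μ1 μ2 ε x : ℝ)
    (h : (μ1 - μ2) * (2*x - μ1 - μ2) ≤ 2 * ε * (v:ℝ)) :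
    gaussianPDFReal μ1 v x ≤ Real.exp ε * gaussianPDFReal μ2 v x := by
  have hv0 := coe_pos hv
  rw [gaussianPDFReal, gaussianPDFReal, mul_left_comm, ← Real.exp_add]
  apply mul_le_mul_of_nonneg_left _ (inv_nonneg.2 (Real.sqrt_nonneg _))
  apply Real.exp_le_exp.mpr
  have key : -(x-μ1)^2 / (2*(v:ℝ)) - (-(x-μ2)^2/(2*(v:ℝ))) ≤ ε := by
    rw [div_sub_div_same, div_le_iff₀ (by positivity)]
    nlinarith [h]
  linarith [key]

lemma split (hv : v ≠ 0) (μ1 μ2 ε : ℝ) (S B : Set ℝ)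
    (h : ∀ x, x ∉ B → gaussianPDFReal μ1 v x ≤ Real.exp ε * gaussianPDFReal μ2 v x) :
    gaussianReal μ1 v S ≤
      ENNReal.ofReal (Real.exp ε) * gaussianReal μ2 v S + gaussianReal μ1 v B := by
  have hsub : S ⊆ (S ∩ Bᶜ) ∪ B := by
    intro x hx
    by_cases hxB : x ∈ B
    exacts [Or.inr hxB, Or.inl ⟨hx, hxB⟩]
  calc gaussianReal μ1 v S ≤ gaussianReal μ1 v ((S ∩ Bᶜ) ∪ B) := measure_mono hsub
    _ ≤ gaussianReal μ1 v (S ∩ Bᶜ) + gaussianReal μ1 v B := measure_union_le _ _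
    _ ≤ ENNReal.ofReal (Real.exp ε) * gaussianReal μ2 v S + gaussianReal μ1 v B := by
        refine add_le_add_left ?_ _
        rw [gaussianReal_apply _ hv, gaussianReal_apply _ hv]
        calc ∫⁻ x in S ∩ Bᶜ, gaussianPDF μ1 v x
            ≤ ∫⁻ x in S ∩ Bᶜ, ENNReal.ofReal (Real.exp ε) * gaussianPDF μ2 v x := by
              refine setLIntegral_mono (measurable_const.mul (measurable_gaussianPDF _ _))
                fun x hx => ?_
              simp only [gaussianPDF, ← ENNReal.ofReal_mul (Real.exp_nonneg ε)]
              exact ENNReal.ofReal_le_ofReal (h x hx.2)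
          _ = ENNReal.ofReal (Real.exp ε) * ∫⁻ x in S ∩ Bᶜ, gaussianPDF μ2 v x :=
              lintegral_const_mul _ (measurable_gaussianPDF _ _)
          _ ≤ ENNReal.ofReal (Real.exp ε) * ∫⁻ x in S, gaussianPDF μ2 v x :=
              mul_le_mul_right (lintegral_mono' (Measure.restrict_mono
                Set.inter_subset_left le_rfl) le_rfl) _


lemma le_of_sq_le_sq {c x : ℝ} (h : c^2 ≤ x^2) (hx : 0 ≤ x) : c ≤ x := by
  nlinarith [sq_nonneg (c - x), sq_nonneg (c + x)]

lemma sqrt_two_pi_ge : (2.5:ℝ) ≤ Real.sqrt (2*π) := by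
  nlinarith [Real.sq_sqrt (show (0:ℝ) ≤ 2*π by positivity),
    Real.sqrt_nonneg (2*π), Real.pi_gt_d6]

lemma exp_half_le : Real.exp (1/2) ≤ 1.65 := by
  have h1 : Real.exp (1/2) * Real.exp (1/2) = Real.exp 1 := by
    rw [← Real.exp_add]
    norm_num
  nlinarith [Real.exp_one_lt_d9, Real.exp_pos (1/2)]

lemma a0_sq {u w L : ℝ} (hu2 : u^2 = 2*L) (hw : 2*u*w = 1) : 2*L - 1 ≤ (u - w)^2 := by
  nlinarith [sq_nonneg w]

lemma final_small {δ E : ℝ} (hδ : 0 < δ) (hE : 0 ≤ E) (he : E ≤ 1.65) :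
    (δ/1.25 * E) * ((1/2.5)*(1/0.63)) ≤ δ := by
  have h08 : δ/1.25 = 0.8*δ := by ring
  rw [h08]
  nlinarith [mul_nonneg hδ.le (sub_nonneg.mpr he)]

lemma two_eps_sigma {ε σ t : ℝ} (hσ0 : 0 < σ) (ht : 2*σ*t = 1) (ha : ε*σ - t < 0) :
    2*ε*σ^2 < 1 := by
  nlinarith

lemma L_lt_quarter {u ε σ L : ℝ} (hu2 : u^2 = 2*L) (hu0 : 0 < u) (hσu : u ≤ ε*σ)
    (h2 : 2*ε*σ^2 < 1) (hε : 0 < ε) (hε1 : ε < 1) (hσ0 : 0 < σ) : L < 1/4 := by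
  nlinarith [mul_le_mul hσu hσu hu0.le (le_trans hu0.le hσu)]

lemma main (μ1 μ2 Sf ε δ σ : ℝ) (hΔ : |μ1 - μ2| ≤ Sf)
    (hε : 0 < ε) (hε1 : ε < 1) (hδ : 0 < δ)
    (hσ : Real.sqrt (2 * Real.log (1.25 / δ)) / ε ≤ σ) (S : Set ℝ) :
    gaussianReal μ1 ((σ ^ 2 * Sf ^ 2).toNNReal) S ≤
      ENNReal.ofReal (Real.exp ε) * gaussianReal μ2 ((σ ^ 2 * Sf ^ 2).toNNReal) S +
        ENNReal.ofReal δ := by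
  set v : ℝ≥0 := (σ ^ 2 * Sf ^ 2).toNNReal with hvdef
  by_cases hδ1 : 1 ≤ δ
  · calc gaussianReal μ1 v S ≤ 1 := prob_le_one
      _ ≤ ENNReal.ofReal δ := by
          rw [← ENNReal.ofReal_one]; exact ENNReal.ofReal_le_ofReal hδ1
      _ ≤ _ := le_add_self
  push_neg at hδ1
  -- basic quantities
  set L := Real.log (1.25 / δ) with hLdef
  have hL0 : 0 < L := Real.log_pos (by rw [lt_div_iff₀ hδ]; linarith)
  have hLlb : 1 - δ / 1.25 ≤ L := by
    have h := Real.log_le_sub_one_of_pos (show 0 < δ / 1.25 by positivity)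
    have hinv : Real.log (δ / 1.25) = -L := by
      rw [hLdef, ← Real.log_inv, inv_div]
    rw [hinv] at h
    linarith
  have h08 : δ / 1.25 = 0.8 * δ := by ring
  have hexpL : Real.exp (-L) = δ / 1.25 := by
    rw [Real.exp_neg, hLdef, Real.exp_log (by positivity), inv_div]
  set u := Real.sqrt (2 * L) with hudef
  have hu2 : u ^ 2 = 2 * L := Real.sq_sqrt (by linarith)
  have hu0 : 0 < u := Real.sqrt_pos.mpr (by linarith)
  have hσu : u ≤ ε * σ := by
    rw [div_le_iff₀ hε] at hσ
    linarith
  have hσ0 : 0 < σ := by nlinarith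
  have hσu2 : u ≤ σ := by nlinarith
  have hSf0 : 0 ≤ Sf := le_trans (abs_nonneg _) hΔ
  rcases eq_or_lt_of_le hSf0 with hSfz | hSfpos
  · -- Sf = 0 : the two measures coincide
    have hμeq : μ1 = μ2 := by
      have := abs_nonneg (μ1 - μ2)
      have h0 : |μ1 - μ2| = 0 := le_antisymm (by rw [← hSfz] at hΔ; exact hΔ) this
      have := abs_eq_zero.mp h0
      linarith [sub_eq_zero.mp this]
    rw [hμeq]
    refine le_trans ?_ le_self_add
    exact le_mul_of_one_le_left zero_le (by
      rw [← ENNReal.ofReal_one]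
      exact ENNReal.ofReal_le_ofReal (Real.one_le_exp hε.le))
  · -- main case
    set s := σ * Sf with hsdef
    have hs : 0 < s := mul_pos hσ0 hSfpos
    have hvr : ((v : ℝ≥0) : ℝ) = s ^ 2 := by
      rw [hvdef, Real.coe_toNNReal _ (by positivity), hsdef]; ring
    have hvne : v ≠ 0 := by
      intro h
      rw [h] at hvr
      simp only [NNReal.coe_zero] at hvr
      nlinarith
    have hv0 : (0:ℝ) < (v:ℝ) := coe_pos hvne
    set a := ε * σ - 1 / (2 * σ) with hadef
    have hsa : s * a = ε * σ ^ 2 * Sf - Sf / 2 := by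
      rw [hadef, hsdef]; field_simp
    set B : Set ℝ := {x | 2 * ε * (v:ℝ) < (μ1 - μ2) * (2*x - μ1 - μ2)} with hBdef
    have hratio : ∀ x, x ∉ B → gaussianPDFReal μ1 v x ≤ Real.exp ε * gaussianPDFReal μ2 v x := by
      intro x hx
      refine pdf_ratio hvne μ1 μ2 ε x ?_
      simpa [hBdef] using hx
    have key1 : gaussianReal μ1 v B ≤ gaussianReal 0 v (Set.Ioi (s * a)) := by
      have hΔle : μ1 - μ2 ≤ Sf := le_trans (le_abs_self _) hΔ
      have hΔge : -(μ1 - μ2) ≤ Sf := le_trans (neg_le_abs _) hΔ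
      have claim : ∀ d : ℝ, 0 < d → d ≤ Sf → s * a ≤ ε * (v:ℝ) / d - d / 2 := by
        intro d hd hdSf
        have h1 : ε * σ ^ 2 * Sf ≤ ε * (v:ℝ) / d := by
          rw [le_div_iff₀ hd, hvr, hsdef]
          nlinarith [mul_nonneg (mul_nonneg hε.le (sq_nonneg σ)) hSfpos.le,
            sub_nonneg.mpr hdSf]
        linarith [hsa]
      rcases lt_trichotomy (μ1 - μ2) 0 with hneg | hzero | hpos
      · set k := ε * (v:ℝ) / (μ1 - μ2) + (μ1 + μ2)/2 with hkdef
        have hk : (μ1 - μ2) * (2*k - μ1 - μ2) = 2 * ε * (v:ℝ) := by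
          rw [hkdef]
          field_simp [hneg.ne]
          ring
        have hBeq : B = Set.Iio k := by
          ext x
          simp only [hBdef, Set.mem_setOf_eq, Set.mem_Iio]
          constructor <;> intro h' <;> nlinarith [hk]
        have hkr : s * a ≤ -(k - μ1) := by
          have hc := claim (-(μ1 - μ2)) (by linarith) hΔge
          have hk2 : -(k - μ1) = ε*(v:ℝ)/(-(μ1-μ2)) - (-(μ1-μ2))/2 := by
            rw [hkdef, div_neg]
            ring
          rw [hk2]
          exact hc
        rw [hBeq, show k = μ1 + (k - μ1) by ring, translate_Iio, neg_Iio]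
        exact measure_mono (Set.Ioi_subset_Ioi hkr)
      · have hBeq : B = ∅ := by
          ext x
          simp only [hBdef, Set.mem_setOf_eq, Set.mem_empty_iff_false, iff_false, not_lt,
            hzero, zero_mul]
          positivity
        rw [hBeq]
        simp
      · set k := ε * (v:ℝ) / (μ1 - μ2) + (μ1 + μ2)/2 with hkdef
        have hk : (μ1 - μ2) * (2*k - μ1 - μ2) = 2 * ε * (v:ℝ) := by
          rw [hkdef]
          field_simp [hpos.ne']
          ring
        have hBeq : B = Set.Ioi k := by
          ext x
          simp only [hBdef, Set.mem_setOf_eq, Set.mem_Ioi]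
          constructor <;> intro h' <;> nlinarith [hk]
        have hkr : s * a ≤ k - μ1 := by
          have hc := claim (μ1 - μ2) hpos hΔle
          have hk2 : k - μ1 = ε*(v:ℝ)/(μ1-μ2) - (μ1-μ2)/2 := by
            rw [hkdef]
            ring
          rw [hk2]
          exact hc
        rw [hBeq, show k = μ1 + (k - μ1) by ring, translate_Ioi]
        exact measure_mono (Set.Ioi_subset_Ioi hkr)
    have key2 : gaussianReal 0 v (Set.Ioi (s * a)) ≤ ENNReal.ofReal δ := by
      have hsπ : (0:ℝ) < Real.sqrt (2*π) := Real.sqrt_pos.mpr (by positivity)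
      have hsqrt2pi : (2.5:ℝ) ≤ Real.sqrt (2*π) := sqrt_two_pi_ge
      have hsqrtv : Real.sqrt (2 * π * (v:ℝ)) = Real.sqrt (2*π) * s := by
        rw [hvr, show 2*π*s^2 = (2*π)*s^2 by ring, Real.sqrt_mul (by positivity),
          Real.sqrt_sq hs.le]
      have hi1 : (Real.sqrt (2*π))⁻¹ ≤ 1/2.5 := by
        rw [inv_eq_one_div]
        apply one_div_le_one_div_of_le
        · norm_num
        · exact hsqrt2pi
      by_cases hδhalf : δ < 1/2
      · -- sharp tail bound
        have hL06 : 0.6 ≤ L := by linarith [h08]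
        have hu109 : 1.09 ≤ u := le_of_sq_le_sq (by rw [hu2]; linarith) hu0.le
        set w := 1/(2*u) with hwdef
        have hw : 2*u*w = 1 := by
          rw [hwdef]
          field_simp
        have hwpos : 0 < w := by positivity
        set a0 := u - w with ha0def
        have ha0pos : 0.63 ≤ a0 := by
          have hwle : w ≤ 1/(2*1.09) := by
            rw [hwdef]
            apply one_div_le_one_div_of_le
            · norm_num
            · linarith
          rw [ha0def]
          have : (1:ℝ)/(2*1.09) ≤ 0.46 := by norm_num
          linarith
        have ha0a : a0 ≤ a := by
          rw [ha0def, hadef, hwdef]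
          have h1 : 1/(2*σ) ≤ 1/(2*u) := by
            apply one_div_le_one_div_of_le
            · positivity
            · linarith
          linarith [hσu]
        have hc0 : 0 < s * a0 := mul_pos hs (by linarith)
        refine le_trans (measure_mono (Set.Ioi_subset_Ioi
          (mul_le_mul_of_nonneg_left ha0a hs.le)))
          (le_trans (tail hvne hc0) (ENNReal.ofReal_le_ofReal ?_))
        have hexp_eq : -(s*a0)^2/(2*(v:ℝ)) = -a0^2/2 := by
          rw [hvr]
          field_simp
        rw [hsqrtv, hexp_eq, hvr]
        have hre : (Real.sqrt (2*π) * s)⁻¹ * (s*a0)⁻¹ * (s^2 * Real.exp (-a0^2/2))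
            = Real.exp (-a0^2/2) * ((Real.sqrt (2*π))⁻¹ * a0⁻¹) := by
          field_simp
        rw [hre]
        have hexpbound : Real.exp (-a0^2/2) ≤ δ/1.25 * Real.exp (1/2) := by
          have h1 : -a0^2/2 ≤ -L + 1/2 := by
            have h2 := a0_sq hu2 hw
            rw [ha0def]
            linarith
          calc Real.exp (-a0^2/2) ≤ Real.exp (-L + 1/2) := Real.exp_le_exp.mpr h1
            _ = δ/1.25 * Real.exp (1/2) := by rw [Real.exp_add, hexpL]
        have he12 : Real.exp (1/2) ≤ 1.65 := exp_half_le
        have hi2 : a0⁻¹ ≤ 1/0.63 := by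
          rw [inv_eq_one_div]
          apply one_div_le_one_div_of_le
          · norm_num
          · exact ha0pos
        calc Real.exp (-a0^2/2) * ((Real.sqrt (2*π))⁻¹ * a0⁻¹)
            ≤ (δ/1.25 * Real.exp (1/2)) * ((1/2.5) * (1/0.63)) := by
              refine mul_le_mul hexpbound ?_ ?_ (by positivity)
              · exact mul_le_mul hi1 hi2 (inv_nonneg.mpr (by linarith)) (by norm_num)
              · positivity
          _ ≤ δ := final_small hδ (Real.exp_pos _).le he12
      · push_neg at hδhalf
        by_cases ha : 0 ≤ a
        · refine le_trans (measure_mono (Set.Ioi_subset_Ioi (mul_nonneg hs.le ha)))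
            (le_trans half (ENNReal.ofReal_le_ofReal (by linarith)))
        · push_neg at ha
          have hinv2σ : (2*σ)*(1/(2*σ)) = 1 := by field_simp
          have h2εσ : 2*ε*σ^2 < 1 := two_eps_sigma hσ0 hinv2σ (by rw [hadef] at ha; exact ha)
          have hL14 : L < 1/4 := L_lt_quarter hu2 hu0 hσu h2εσ hε hε1 hσ0
          have hδbig : 0.9375 ≤ δ := by
            have h1 := Real.add_one_le_exp (-L)
            rw [hexpL] at h1
            linarith [h08, hL14]
          have hsub : Set.Ioi (s*a) ⊆ Set.Ioc (s*a) 0 ∪ Set.Ioi 0 := by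
            intro x hx
            by_cases hx0 : x ≤ 0
            · exact Or.inl ⟨hx, hx0⟩
            · exact Or.inr (by push_neg at hx0; exact hx0)
          refine le_trans (measure_mono hsub) (le_trans (measure_union_le _ _) ?_)
          have hsa0 : (0:ℝ) ≤ -(s*a) * (Real.sqrt (2 * π * (v:ℝ)))⁻¹ := by
            refine mul_nonneg ?_ (inv_nonneg.mpr (Real.sqrt_nonneg _))
            rw [show -(s*a) = s*(-a) by ring]
            exact mul_nonneg hs.le (by linarith)
          refine le_trans (add_le_add (strip hvne (s*a)) (half (v := v))) ?_
          rw [← ENNReal.ofReal_add hsa0 (by norm_num)]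
          apply ENNReal.ofReal_le_ofReal
          rw [hsqrtv]
          have hval : -(s*a) * (Real.sqrt (2*π) * s)⁻¹ = -a * (Real.sqrt (2*π))⁻¹ := by
            field_simp
          rw [hval]
          have hna : -a ≤ 1/(2*σ) := by
            rw [hadef]
            linarith [mul_pos hε hσ0]
          have hu063 : 0.63 ≤ u := le_of_sq_le_sq (by rw [hu2]; linarith [hLlb, hδ1, h08]) hu0.le
          have h12σ : 1/(2*σ) ≤ 1/(2*0.63) := by
            apply one_div_le_one_div_of_le
            · norm_num
            · linarith [hσu2, hu063]
          have hprod : -a * (Real.sqrt (2*π))⁻¹ ≤ (1/(2*0.63)) * (1/2.5) :=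
            mul_le_mul (hna.trans h12σ) hi1 (inv_nonneg.mpr (Real.sqrt_nonneg _))
              (by norm_num)
          linarith [hδbig]
    calc gaussianReal μ1 v S
        ≤ ENNReal.ofReal (Real.exp ε) * gaussianReal μ2 v S + gaussianReal μ1 v B :=
          split hvne μ1 μ2 ε S B hratio
      _ ≤ _ := add_le_add_right (key1.trans key2) _

end GaussDP

/-- The Gaussian mechanism `F(x) = f(x) + N(0, σ² S_f²)`, where `S_f` bounds
the sensitivity of `f` (`|f(D) - f(D')| ≤ S_f` for all adjacent `D, D'`),
satisfies `(ε, δ)`-differential privacy whenever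
`σ ≥ √(2 ln(1.25/δ)) / ε` with `ε ∈ (0, 1)`:
for all adjacent `D, D'` and measurable `S`,
`Pr[F(D) ∈ S] ≤ e^ε Pr[F(D') ∈ S] + δ`. -/
theorem gaussian_mechanism_DP
    {X : Type*} (adj : X → X → Prop) (f : X → ℝ)
    (Sf ε δ σ : ℝ)
    (hsens : ∀ D D', adj D D' → |f D - f D'| ≤ Sf)
    (hε : 0 < ε) (hε1 : ε < 1) (hδ : 0 < δ)
    (hσ : Real.sqrt (2 * Real.log (1.25 / δ)) / ε ≤ σ) :
    ∀ D D', adj D D' → ∀ S : Set ℝ, MeasurableSet S →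
      gaussianReal (f D) ((σ ^ 2 * Sf ^ 2).toNNReal) S ≤
        ENNReal.ofReal (Real.exp ε) *
          gaussianReal (f D') ((σ ^ 2 * Sf ^ 2).toNNReal) S + ENNReal.ofReal δ := by
  intro D D' hadj S hS
  exact GaussDP.main (f D) (f D') Sf ε δ σ (hsens D D' hadj) hε hε1 hδ hσ S
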